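/- Let n ≥ 1 and let D be a set of n-dimensional F₂-subspaces of the vector space F₂^(2n) such that any two distinct members of D intersect trivially, with |D| = 2^n − 1. Then D is contained in an n-spread of F₂^(2n): there exists a set D' ⊇ D of n-dimensional subspaces, pairwise intersecting trivially, with |D'| = 2^n + 1, so that every nonzero vector of F₂^(2n) lies in exactly one member of D'. -/

import Mathlib

open Module Submodule Set

namespace BPS

variable {n : ℕ}

local notation "K" => ZMod 2
local notation "V" => (Fin (2 * n) → ZMod 2)

lemma finite_submodule : Finite (Submodule K V) :=
  Finite.of_injective (fun U => (U : Set V)) SetLike.coe_injective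

lemma zmod2_cases (c : ZMod 2) : c = 0 ∨ c = 1 := by revert c; decide

lemma add_self (v : V) : v + v = 0 := by
  have h2 : (2 : ZMod 2) = 0 := by decide
  have h : v + v = (2 : ZMod 2) • v := by rw [two_smul]
  rw [h, h2, zero_smul]

lemma eq_of_add_eq_zero' {a b : V} (h : a + b = 0) : a = b := by
  have h2 := congrArg (· + b) h
  simpa [add_assoc, add_self] using h2

lemma card_submodule (U : Submodule K V) :
    (U : Set V).ncard = 2 ^ (finrank K U) := by
  classical
  have : Fintype U := Fintype.ofFinite U
  have h : Fintype.card ↥U = Fintype.card (ZMod 2) ^ finrank K ↥U := card_eq_pow_finrank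
  rw [ZMod.card] at h
  rw [← Nat.card_coe_set_eq, Nat.card_eq_fintype_card]
  exact h

lemma finrankV : finrank K V = 2 * n := Module.finrank_fin_fun K


lemma mem_span_single {x v : V} (h : v ∈ (K ∙ x)) : v = 0 ∨ v = x := by
  rcases Submodule.mem_span_singleton.mp h with ⟨a, rfl⟩
  rcases zmod2_cases a with h1 | h1 <;> subst h1 <;> simp

lemma mem_sup_span_iff {U : Submodule K V} {x : V} (v : V) :
    v ∈ U ⊔ (K ∙ x) ↔ v ∈ U ∨ x + v ∈ U := by
  constructor
  · intro h
    rcases Submodule.mem_sup.mp h with ⟨u, hu, w, hw, rfl⟩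
    rcases mem_span_single hw with rfl | h1
    · left; simpa using hu
    · right
      rw [h1]
      have : x + (u + x) = u := by
        rw [add_comm u x, ← add_assoc, add_self, zero_add]
      rw [this]; exact hu
  · rintro (h | h)
    · exact Submodule.mem_sup_left h
    · have : v = (x + v) + x := by
        rw [add_comm (x+v) x, ← add_assoc, add_self, zero_add]
      rw [this]
      exact Submodule.add_mem _ (Submodule.mem_sup_left h)
        (Submodule.mem_sup_right (Submodule.mem_span_singleton_self x))

lemma sup_span_finrank {U : Submodule K V} (hU : finrank K U = n) {x : V}
    (hx : x ≠ 0) (hxU : x ∉ U) : finrank K ↥(U ⊔ (K ∙ x)) = n + 1 := by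
  have hinf : U ⊓ (K ∙ x) = ⊥ := by
    rw [eq_bot_iff]
    rintro v ⟨hv1, hv2⟩
    rcases mem_span_single hv2 with rfl | rfl
    · exact Submodule.zero_mem _
    · exact absurd hv1 hxU
  have h := Submodule.finrank_sup_add_finrank_inf_eq U (K ∙ x)
  rw [hinf, hU, finrank_span_singleton hx, finrank_bot, add_zero] at h
  exact h

lemma exists_mem_inf {U W : Submodule K V} (hU : finrank K U = n)
    (hW : finrank K W = n + 1) (hn : 1 ≤ n) : ∃ v : V, v ≠ 0 ∧ v ∈ U ∧ v ∈ W := by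
  have h := Submodule.finrank_sup_add_finrank_inf_eq U W
  have hle : finrank K ↥(U ⊔ W) ≤ 2 * n := by
    simpa [finrankV] using Submodule.finrank_le (U ⊔ W)
  rw [hU, hW] at h
  have hpos : 0 < finrank K ↥(U ⊓ W) := by omega
  have hne : U ⊓ W ≠ ⊥ := by
    intro hb
    rw [hb, finrank_bot] at hpos
    omega
  rcases Submodule.ne_bot_iff _ |>.mp hne with ⟨v, hv, hv0⟩
  exact ⟨v, hv0, hv.1, hv.2⟩


/-- `v` is covered by the partial spread `P`. -/
def covered (P : Finset (Submodule K V)) (v : V) : Prop := ∃ U ∈ P, v ∈ U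

/-- The set of holes: nonzero vectors not covered by `P`. -/
def holes (P : Finset (Submodule K V)) : Set V := {v | v ≠ 0 ∧ ¬ covered P v}

lemma partition_count (P : Finset (Submodule K V))
    (hmeet : ∀ U ∈ P, ∀ W ∈ P, U ≠ W → U ⊓ W = ⊥) (X : Set V) :
    (X \ {0}).ncard =
      (∑ U ∈ P, (((U : Set V) ∩ X) \ {0}).ncard) + (X ∩ holes P).ncard := by
  classical
  have key : ((X \ {0}).toFinite.toFinset)
      = (P.biUnion fun U => (((U : Set V) ∩ X) \ {0}).toFinite.toFinset)
        ∪ ((X ∩ holes P).toFinite.toFinset) := by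
    ext v
    simp only [Set.Finite.mem_toFinset, Set.mem_diff, Set.mem_singleton_iff,
      Finset.mem_union, Finset.mem_biUnion, Set.mem_inter_iff, SetLike.mem_coe,
      holes, covered, Set.mem_setOf_eq]
    constructor
    · rintro ⟨hvX, hv0⟩
      by_cases hc : ∃ U ∈ P, v ∈ U
      · rcases hc with ⟨U, hU, hvU⟩
        exact Or.inl ⟨U, hU, ⟨hvU, hvX⟩, hv0⟩
      · exact Or.inr ⟨hvX, hv0, hc⟩
    · rintro (⟨U, hU, ⟨hvU, hvX⟩, hv0⟩ | ⟨hvX, hv0, hc⟩) <;> exact ⟨hvX, hv0⟩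
  have hdisj : Disjoint (P.biUnion fun U => (((U : Set V) ∩ X) \ {0}).toFinite.toFinset)
      ((X ∩ holes P).toFinite.toFinset) := by
    rw [Finset.disjoint_left]
    intro v hv hv'
    simp only [Finset.mem_biUnion, Set.Finite.mem_toFinset, Set.mem_diff,
      Set.mem_inter_iff, SetLike.mem_coe, Set.mem_singleton_iff] at hv hv'
    rcases hv with ⟨U, hU, ⟨hvU, _⟩, _⟩
    exact hv'.2.2 ⟨U, hU, hvU⟩
  have hpair : ∀ U ∈ P, ∀ W ∈ P, U ≠ W →
      Disjoint ((((U : Set V) ∩ X) \ {0}).toFinite.toFinset)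
        ((((W : Set V) ∩ X) \ {0}).toFinite.toFinset) := by
    intro U hU W hW hUW
    rw [Finset.disjoint_left]
    intro v hv hv'
    simp only [Set.Finite.mem_toFinset, Set.mem_diff, Set.mem_inter_iff,
      SetLike.mem_coe, Set.mem_singleton_iff] at hv hv'
    have : v ∈ U ⊓ W := ⟨hv.1.1, hv'.1.1⟩
    rw [hmeet U hU W hW hUW] at this
    exact hv.2 (by simpa using this)
  have hcard := congrArg Finset.card key
  rw [Finset.card_union_of_disjoint hdisj, Finset.card_biUnion hpair] at hcard
  rw [Set.ncard_eq_toFinset_card _ (X \ {0}).toFinite,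
    Set.ncard_eq_toFinset_card _ (X ∩ holes P).toFinite, hcard]
  congr 1
  exact Finset.sum_congr rfl fun U _ => by
    rw [Set.ncard_eq_toFinset_card _ (((U : Set V) ∩ X) \ {0}).toFinite]


lemma ncard_univ_diff : ((Set.univ : Set V) \ {0}).ncard = 2 ^ (2 * n) - 1 := by
  classical
  rw [Set.ncard_diff_singleton_of_mem (Set.mem_univ 0), Set.ncard_univ]
  have h : Fintype.card V = Fintype.card (ZMod 2) ^ finrank K V := card_eq_pow_finrank
  rw [ZMod.card, finrankV] at h
  rw [Nat.card_eq_fintype_card, h]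

lemma ncard_submodule_diff (U : Submodule K V) (hU : finrank K U = n) :
    ((U : Set V) \ {0}).ncard = 2 ^ n - 1 := by
  rw [Set.ncard_diff_singleton_of_mem (Submodule.zero_mem U), card_submodule, hU]

/-- Total hole count. -/
lemma holes_count (P : Finset (Submodule K V))
    (hdim : ∀ U ∈ P, finrank K U = n)
    (hmeet : ∀ U ∈ P, ∀ W ∈ P, U ≠ W → U ⊓ W = ⊥) :
    P.card * (2 ^ n - 1) + (holes P).ncard = 2 ^ (2 * n) - 1 := by
  have h := partition_count P hmeet Set.univ
  rw [ncard_univ_diff] at h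
  have hsum : ∑ U ∈ P, (((U : Set V) ∩ Set.univ) \ {0}).ncard = P.card * (2 ^ n - 1) := by
    rw [Finset.sum_congr rfl fun U hU => by
      rw [Set.inter_univ, ncard_submodule_diff U (hdim U hU)]]
    rw [Finset.sum_const, smul_eq_mul]
  rw [hsum, Set.univ_inter] at h
  omega

/-- Key counting lemma: holes inside an `(n+1)`-dimensional subspace containing a
member of the partial spread. -/
lemma KC (P : Finset (Submodule K V)) (hn : 1 ≤ n)
    (hdim : ∀ U ∈ P, finrank K U = n)
    (hmeet : ∀ U ∈ P, ∀ W ∈ P, U ≠ W → U ⊓ W = ⊥)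
    {U₀ : Submodule K V} (hU₀ : U₀ ∈ P) {X : Submodule K V}
    (hX : finrank K X = n + 1) (hle : U₀ ≤ X) :
    ((X : Set V) ∩ holes P).ncard + (2 ^ n - 1) + (P.card - 1) ≤ 2 ^ (n + 1) - 1 := by
  classical
  have h := partition_count P hmeet (X : Set V)
  have hXcard : ((X : Set V) \ {0}).ncard = 2 ^ (n + 1) - 1 := by
    rw [Set.ncard_diff_singleton_of_mem (Submodule.zero_mem X), card_submodule, hX]
  have hU₀term : (((U₀ : Set V) ∩ (X : Set V)) \ {0}).ncard = 2 ^ n - 1 := by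
    rw [Set.inter_eq_left.mpr hle, ncard_submodule_diff U₀ (hdim U₀ hU₀)]
  have hothers : ∀ U ∈ P.erase U₀, 1 ≤ (((U : Set V) ∩ (X : Set V)) \ {0}).ncard := by
    intro U hU
    have hUP := Finset.mem_of_mem_erase hU
    rcases exists_mem_inf (hdim U hUP) hX hn with ⟨v, hv0, hvU, hvX⟩
    have hv : v ∈ ((U : Set V) ∩ (X : Set V)) \ {0} := ⟨⟨hvU, hvX⟩, hv0⟩
    have : (((U : Set V) ∩ (X : Set V)) \ {0}).Nonempty := ⟨v, hv⟩
    exact (Set.ncard_pos (Set.toFinite _)).mpr this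
  have hsum : (2 ^ n - 1) + (P.card - 1) ≤ ∑ U ∈ P, (((U : Set V) ∩ (X : Set V)) \ {0}).ncard := by
    rw [← Finset.sum_erase_add _ _ hU₀, hU₀term]
    have h1 : (P.erase U₀).card ≤ ∑ U ∈ P.erase U₀, (((U : Set V) ∩ (X : Set V)) \ {0}).ncard := by
      calc (P.erase U₀).card = ∑ _U ∈ P.erase U₀, 1 := by simp
        _ ≤ _ := Finset.sum_le_sum hothers
    rw [Finset.card_erase_of_mem hU₀] at h1
    omega
  rw [hXcard] at h
  omega


lemma not_mem_of_hole {P : Finset (Submodule K V)} {x : V} (hx : x ∈ holes P)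
    {U : Submodule K V} (hU : U ∈ P) : x ∉ U :=
  fun h => hx.2 ⟨U, hU, h⟩

lemma hole_ne_zero {P : Finset (Submodule K V)} {x : V} (hx : x ∈ holes P) : x ≠ 0 := hx.1

/-- Holes in `U ⊔ ⟨x⟩` number at most `2^n + 1 - |P|`. -/
lemma holes_in_sup_le (P : Finset (Submodule K V)) (hn : 1 ≤ n)
    (hdim : ∀ U ∈ P, finrank K U = n)
    (hmeet : ∀ U ∈ P, ∀ W ∈ P, U ≠ W → U ⊓ W = ⊥)
    {U : Submodule K V} (hU : U ∈ P) {x : V} (hx0 : x ≠ 0) (hxU : x ∉ U) :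
    (((U ⊔ (K ∙ x) : Submodule K V) : Set V) ∩ holes P).ncard ≤ 2 ^ n + 1 - P.card := by
  have hX : finrank K ↥(U ⊔ (K ∙ x)) = n + 1 := sup_span_finrank (hdim U hU) hx0 hxU
  have h := KC P hn hdim hmeet hU hX le_sup_left
  have he : 2 ≤ 2 ^ n := by
    calc 2 = 2 ^ 1 := rfl
    _ ≤ 2 ^ n := Nat.pow_le_pow_right (by norm_num) hn
  have hP1 : 1 ≤ P.card := Finset.card_pos.mpr ⟨U, hU⟩
  omega

/-- Uniqueness of the partner of a hole `x` w.r.t. a member `U`. -/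
lemma partner_unique (P : Finset (Submodule K V)) (hn : 1 ≤ n)
    (hdim : ∀ U ∈ P, finrank K U = n)
    (hmeet : ∀ U ∈ P, ∀ W ∈ P, U ≠ W → U ⊓ W = ⊥)
    (hcard : P.card = 2 ^ n - 1)
    {U : Submodule K V} (hU : U ∈ P) {x y₁ y₂ : V} (hx : x ∈ holes P)
    (hy₁ : y₁ ∈ holes P) (hy₂ : y₂ ∈ holes P)
    (hxy₁ : x + y₁ ∈ U) (hxy₂ : x + y₂ ∈ U)
    (h1x : y₁ ≠ x) (h2x : y₂ ≠ x) : y₁ = y₂ := by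
  by_contra hne
  have hxU : x ∉ U := not_mem_of_hole hx hU
  have h := holes_in_sup_le P hn hdim hmeet hU (hole_ne_zero hx) hxU
  have he : 2 ≤ 2 ^ n := by
    calc 2 = 2 ^ 1 := rfl
    _ ≤ 2 ^ n := Nat.pow_le_pow_right (by norm_num) hn
  rw [hcard] at h
  have hsub : ({x, y₁, y₂} : Set V) ⊆ ((U ⊔ (K ∙ x) : Submodule K V) : Set V) ∩ holes P := by
    rintro v hv
    simp only [Set.mem_insert_iff, Set.mem_singleton_iff] at hv
    rcases hv with hv | hv | hv <;> rw [hv]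
    · exact ⟨Submodule.mem_sup_right (Submodule.mem_span_singleton_self x), hx⟩
    · exact ⟨(mem_sup_span_iff y₁).mpr (Or.inr hxy₁), hy₁⟩
    · exact ⟨(mem_sup_span_iff y₂).mpr (Or.inr hxy₂), hy₂⟩
  have h3 : ({x, y₁, y₂} : Set V).ncard = 3 := by
    rw [Set.ncard_insert_of_notMem (by simp [Ne.symm h1x, Ne.symm h2x]) (Set.toFinite _),
      Set.ncard_pair hne]
  have hle := Set.ncard_le_ncard hsub (Set.toFinite _)
  omega


lemma two_le_pow (hn : 1 ≤ n) : 2 ≤ 2 ^ n := by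
  calc 2 = 2 ^ 1 := rfl
  _ ≤ 2 ^ n := Nat.pow_le_pow_right (by norm_num) hn

lemma pow_two_mul : (2:ℕ) ^ (2 * n) = 2 ^ n * 2 ^ n := by rw [two_mul, pow_add]

lemma holes_card_phase1 (P : Finset (Submodule K V)) (hn : 1 ≤ n)
    (hdim : ∀ U ∈ P, finrank K U = n)
    (hmeet : ∀ U ∈ P, ∀ W ∈ P, U ≠ W → U ⊓ W = ⊥)
    (hcard : P.card = 2 ^ n - 1) :
    (holes P).ncard = 2 * 2 ^ n - 2 := by
  have h := holes_count P hdim hmeet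
  have h2 := pow_two_mul (n := n)
  have he := two_le_pow hn
  rw [hcard] at h
  have hexp : (2 ^ n - 1) * (2 ^ n - 1) + (holes P).ncard = 2 ^ n * 2 ^ n - 1 := by
    rw [← h2]; exact h
  obtain ⟨m, hm⟩ : ∃ m, 2 ^ n = m + 2 := ⟨2 ^ n - 2, by omega⟩
  rw [hm] at hexp ⊢
  have h1 : m + 2 - 1 = m + 1 := by omega
  rw [h1] at hexp
  have e1 : (m + 1) * (m + 1) = m * m + 2 * m + 1 := by ring
  have e2 : (m + 2) * (m + 2) = m * m + 4 * m + 4 := by ring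
  omega

lemma holes_card_phase2 (P : Finset (Submodule K V)) (hn : 1 ≤ n)
    (hdim : ∀ U ∈ P, finrank K U = n)
    (hmeet : ∀ U ∈ P, ∀ W ∈ P, U ≠ W → U ⊓ W = ⊥)
    (hcard : P.card = 2 ^ n) :
    (holes P).ncard = 2 ^ n - 1 := by
  have h := holes_count P hdim hmeet
  have h2 := pow_two_mul (n := n)
  have he := two_le_pow hn
  rw [hcard] at h
  have hexp : 2 ^ n * (2 ^ n - 1) + (holes P).ncard = 2 ^ n * 2 ^ n - 1 := by
    rw [← h2]; exact h
  obtain ⟨m, hm⟩ : ∃ m, 2 ^ n = m + 2 := ⟨2 ^ n - 2, by omega⟩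
  rw [hm] at hexp ⊢
  have h1 : m + 2 - 1 = m + 1 := by omega
  rw [h1] at hexp
  have e1 : (m + 2) * (m + 1) = m * m + 3 * m + 2 := by ring
  have e2 : (m + 2) * (m + 2) = m * m + 4 * m + 4 := by ring
  omega

/-- The number of holes `y ≠ x` with `x + y` covered is at most `|P|`. -/
lemma nonneighbor_le (P : Finset (Submodule K V)) (hn : 1 ≤ n)
    (hdim : ∀ U ∈ P, finrank K U = n)
    (hmeet : ∀ U ∈ P, ∀ W ∈ P, U ≠ W → U ⊓ W = ⊥)
    (hcard : P.card = 2 ^ n - 1) {x : V} (hx : x ∈ holes P) :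
    ({y | y ∈ holes P ∧ y ≠ x ∧ covered P (x + y)}).ncard ≤ P.card := by
  classical
  set B := {y | y ∈ holes P ∧ y ≠ x ∧ covered P (x + y)} with hB
  have hsub : B.toFinite.toFinset ⊆
      P.biUnion fun U => ({y | y ∈ holes P ∧ y ≠ x ∧ x + y ∈ U}).toFinite.toFinset := by
    intro y hy
    simp only [Set.Finite.mem_toFinset, hB, Set.mem_setOf_eq] at hy
    rcases hy with ⟨hyH, hyx, U, hUP, hyU⟩
    simp only [Finset.mem_biUnion, Set.Finite.mem_toFinset, Set.mem_setOf_eq]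
    exact ⟨U, hUP, hyH, hyx, hyU⟩
  have hone : ∀ U ∈ P, ({y | y ∈ holes P ∧ y ≠ x ∧ x + y ∈ U}).toFinite.toFinset.card ≤ 1 := by
    intro U hU
    rw [Finset.card_le_one]
    intro y₁ hy₁ y₂ hy₂
    simp only [Set.Finite.mem_toFinset, Set.mem_setOf_eq] at hy₁ hy₂
    exact partner_unique P hn hdim hmeet hcard hU hx hy₁.1 hy₂.1 hy₁.2.2 hy₂.2.2 hy₁.2.1 hy₂.2.1
  calc B.ncard = B.toFinite.toFinset.card := Set.ncard_eq_toFinset_card _ _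
  _ ≤ (P.biUnion fun U => ({y | y ∈ holes P ∧ y ≠ x ∧ x + y ∈ U}).toFinite.toFinset).card :=
      Finset.card_le_card hsub
  _ ≤ ∑ U ∈ P, ({y | y ∈ holes P ∧ y ≠ x ∧ x + y ∈ U}).toFinite.toFinset.card :=
      Finset.card_biUnion_le
  _ ≤ ∑ _U ∈ P, 1 := Finset.sum_le_sum hone
  _ = P.card := by simp

/-- Surjectivity: every nonzero vector of a member is a sum of two holes. -/
lemma exists_pair (P : Finset (Submodule K V)) (hn : 1 ≤ n)
    (hdim : ∀ U ∈ P, finrank K U = n)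
    (hmeet : ∀ U ∈ P, ∀ W ∈ P, U ≠ W → U ⊓ W = ⊥)
    (hcard : P.card = 2 ^ n - 1)
    {U : Submodule K V} (hU : U ∈ P) {u : V} (hu : u ∈ U) (hu0 : u ≠ 0) :
    ∃ a, a ∈ holes P ∧ a + u ∈ holes P := by
  classical
  by_contra hcon
  push_neg at hcon
  have he := two_le_pow hn
  have hstep : ∀ a ∈ holes P, ∃ U' ∈ P.erase U,
      a ∈ (((U' ⊔ (K ∙ u) : Submodule K V) : Set V) ∩ holes P) := by
    intro a ha
    have hau0 : a + u ≠ 0 := by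
      intro h0
      have : a = u := by
        have := congrArg (· + u) h0
        simpa [add_assoc, add_self] using this
      exact ha.2 ⟨U, hU, this ▸ hu⟩
    have haunh : a + u ∉ holes P := hcon a ha
    have : covered P (a + u) := by
      by_contra hnc
      exact haunh ⟨hau0, hnc⟩
    rcases this with ⟨U', hU'P, hU'⟩
    have hne : U' ≠ U := by
      rintro rfl
      exact ha.2 ⟨U', hU'P, by simpa [add_assoc, add_self] using Submodule.add_mem U' hU' hu⟩
    refine ⟨U', Finset.mem_erase.mpr ⟨hne, hU'P⟩, ?_, ha⟩
    exact (mem_sup_span_iff a).mpr (Or.inr (by rwa [add_comm u a]))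
  have hsub : (holes P).toFinite.toFinset ⊆ (P.erase U).biUnion
      fun U' => (((U' ⊔ (K ∙ u) : Submodule K V) : Set V) ∩ holes P).toFinite.toFinset := by
    intro a ha
    rw [Set.Finite.mem_toFinset] at ha
    rcases hstep a ha with ⟨U', hU'm, hmem⟩
    simp only [Finset.mem_biUnion, Set.Finite.mem_toFinset]
    exact ⟨U', hU'm, hmem⟩
  have hbound : ∀ U' ∈ P.erase U,
      (((U' ⊔ (K ∙ u) : Submodule K V) : Set V) ∩ holes P).toFinite.toFinset.card ≤ 2 := by
    intro U' hU'm
    rcases Finset.mem_erase.mp hU'm with ⟨hne, hU'P⟩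
    have huU' : u ∉ U' := by
      intro hmem
      have : u ∈ U' ⊓ U := ⟨hmem, hu⟩
      rw [hmeet U' hU'P U hU (by exact hne)] at this
      exact hu0 (by simpa using this)
    have := holes_in_sup_le P hn hdim hmeet hU'P hu0 huU'
    rw [hcard] at this
    rw [← Set.ncard_eq_toFinset_card]
    omega
  have hHcard : (holes P).toFinite.toFinset.card = 2 * 2 ^ n - 2 := by
    rw [← Set.ncard_eq_toFinset_card]
    exact holes_card_phase1 P hn hdim hmeet hcard
  have hle : (holes P).toFinite.toFinset.card ≤ (P.erase U).card * 2 := by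
    calc (holes P).toFinite.toFinset.card
        ≤ ((P.erase U).biUnion fun U' =>
          (((U' ⊔ (K ∙ u) : Submodule K V) : Set V) ∩ holes P).toFinite.toFinset).card :=
        Finset.card_le_card hsub
    _ ≤ ∑ U' ∈ P.erase U,
          (((U' ⊔ (K ∙ u) : Submodule K V) : Set V) ∩ holes P).toFinite.toFinset.card :=
        Finset.card_biUnion_le
    _ ≤ ∑ _U' ∈ P.erase U, 2 := Finset.sum_le_sum hbound
    _ = (P.erase U).card * 2 := by rw [Finset.sum_const, smul_eq_mul]
  rw [Finset.card_erase_of_mem hU, hcard, hHcard] at hle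
  omega


/-- Transitivity of the adjacency relation on holes. -/
lemma hole_trans (P : Finset (Submodule K V)) (hn : 1 ≤ n)
    (hdim : ∀ U ∈ P, finrank K U = n)
    (hmeet : ∀ U ∈ P, ∀ W ∈ P, U ≠ W → U ⊓ W = ⊥)
    (hcard : P.card = 2 ^ n - 1)
    {x y z : V} (hx : x ∈ holes P) (hy : y ∈ holes P) (hz : z ∈ holes P)
    (hxy : x + y ∈ holes P) (hyz : y + z ∈ holes P) (hxz : x ≠ z) :
    x + z ∈ holes P := by
  classical
  by_contra hcon
  have he := two_le_pow hn
  have hu0 : x + z ≠ 0 := by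
    intro h0
    apply hxz
    have := congrArg (· + z) h0
    simpa [add_assoc, add_self] using this
  have hcov : covered P (x + z) := by
    by_contra hnc
    exact hcon ⟨hu0, hnc⟩
  obtain ⟨U, hU, hu⟩ := hcov
  set u := x + z with hudef
  set H := holes P with hH
  set A : Finset V := (((U : Set V)) \ {0}).toFinite.toFinset with hA
  set Hf : Finset V := H.toFinite.toFinset with hHf
  have hmemA : ∀ u' : V, u' ∈ A ↔ u' ∈ U ∧ u' ≠ 0 := by
    intro u'
    rw [hA, Set.Finite.mem_toFinset]
    exact ⟨fun h => ⟨h.1, h.2⟩, fun h => ⟨h.1, h.2⟩⟩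
  have hmemHf : ∀ a : V, a ∈ Hf ↔ a ∈ H := by
    intro a
    rw [hHf, Set.Finite.mem_toFinset]
  set T : Finset (V × V) := A.biUnion
    (fun u' => ((Hf.filter fun a => a + u' ∈ H).image fun a => (u', a))) with hT
  -- upper bound
  have hupper : T.card ≤ Hf.card := by
    have hsub : T ⊆ Hf.biUnion
        (fun a => ((A.filter fun u' => a + u' ∈ H).image fun u' => (u', a))) := by
      intro p hp
      simp only [hT, Finset.mem_biUnion, Finset.mem_image, Finset.mem_filter] at hp
      rcases hp with ⟨u', hu'A, a, ⟨haH, haU⟩, rfl⟩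
      simp only [Finset.mem_biUnion, Finset.mem_image, Finset.mem_filter]
      exact ⟨a, haH, u', ⟨hu'A, haU⟩, rfl⟩
    have hone : ∀ a ∈ Hf, ((A.filter fun u' => a + u' ∈ H).image fun u' => (u', a)).card ≤ 1 := by
      intro a haf
      rw [hmemHf] at haf
      have : (A.filter fun u' => a + u' ∈ H).card ≤ 1 := by
        rw [Finset.card_le_one]
        intro u₁ h₁ u₂ h₂
        rw [Finset.mem_filter, hmemA] at h₁ h₂
        have harg1 : a + (a + u₁) ∈ U := by
          rw [← add_assoc, add_self, zero_add]; exact h₁.1.1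
        have harg2 : a + (a + u₂) ∈ U := by
          rw [← add_assoc, add_self, zero_add]; exact h₂.1.1
        have hne1 : a + u₁ ≠ a := by
          intro hh
          apply h₁.1.2
          have h0 := congrArg (a + ·) hh
          simpa [← add_assoc, add_self, zero_add] using h0
        have hne2 : a + u₂ ≠ a := by
          intro hh
          apply h₂.1.2
          have h0 := congrArg (a + ·) hh
          simpa [← add_assoc, add_self, zero_add] using h0
        have key := partner_unique P hn hdim hmeet hcard hU haf h₁.2 h₂.2
          harg1 harg2 hne1 hne2
        exact add_left_cancel key
      calc ((A.filter fun u' => a + u' ∈ H).image fun u' => (u', a)).card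
          ≤ (A.filter fun u' => a + u' ∈ H).card := Finset.card_image_le
        _ ≤ 1 := this
    calc T.card ≤ (Hf.biUnion
        (fun a => ((A.filter fun u' => a + u' ∈ H).image fun u' => (u', a)))).card :=
        Finset.card_le_card hsub
      _ ≤ ∑ a ∈ Hf, ((A.filter fun u' => a + u' ∈ H).image fun u' => (u', a)).card :=
        Finset.card_biUnion_le
      _ ≤ ∑ _a ∈ Hf, 1 := Finset.sum_le_sum (fun a ha => hone a (by simpa using ha))
      _ = Hf.card := by simp
  -- lower bound
  have hTcard : T.card = ∑ u' ∈ A, (Hf.filter fun a => a + u' ∈ H).card := by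
    rw [hT, Finset.card_biUnion]
    · refine Finset.sum_congr rfl fun u' _ => ?_
      exact Finset.card_image_of_injective _ (fun a b hab => by
        simpa using congrArg Prod.snd hab)
    · intro u₁ h₁ u₂ h₂ hne
      rw [Function.onFun, Finset.disjoint_left]
      intro p hp₁ hp₂
      simp only [Finset.mem_image, Finset.mem_filter] at hp₁ hp₂
      rcases hp₁ with ⟨a, _, rfl⟩
      rcases hp₂ with ⟨b, _, hb⟩
      exact hne (by simpa using (congrArg Prod.fst hb).symm)
  have hAcard : A.card = 2 ^ n - 1 := by
    rw [hA, ← Set.ncard_eq_toFinset_card]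
    exact ncard_submodule_diff U (hdim U hU)
  have huA : u ∈ A := (hmemA u).mpr ⟨hu, hu0⟩
  -- f(u) ≥ 4
  have hfour : 4 ≤ (Hf.filter fun a => a + u ∈ H).card := by
    have m1 : x ∈ Hf.filter fun a => a + u ∈ H := by
      rw [Finset.mem_filter, hmemHf]
      have : x + u = z := by rw [hudef, ← add_assoc, add_self, zero_add]
      exact ⟨hx, this ▸ hz⟩
    have m2 : z ∈ Hf.filter fun a => a + u ∈ H := by
      rw [Finset.mem_filter, hmemHf]
      have : z + u = x := by rw [hudef, add_comm x z, ← add_assoc, add_self, zero_add]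
      exact ⟨hz, this ▸ hx⟩
    have m3 : x + y ∈ Hf.filter fun a => a + u ∈ H := by
      rw [Finset.mem_filter, hmemHf]
      have : (x + y) + u = y + z := by
        rw [hudef, add_add_add_comm, add_self, zero_add]
      exact ⟨hxy, this ▸ hyz⟩
    have m4 : y + z ∈ Hf.filter fun a => a + u ∈ H := by
      rw [Finset.mem_filter, hmemHf]
      have : (y + z) + u = x + y := by
        rw [hudef, add_add_add_comm, add_self, add_zero, add_comm y x]
      exact ⟨hyz, this ▸ hxy⟩
    have ne2 : x ≠ x + y := by
      intro h
      have hy0 : y = 0 := by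
        have h0 : x + (x + y) = 0 := by rw [← h, add_self]
        rwa [← add_assoc, add_self, zero_add] at h0
      exact hy.1 hy0
    have ne3 : x ≠ y + z := by
      intro h
      have hxy2 : x + z = y := by rw [h, add_assoc, add_self, add_zero]
      exact hy.2 ⟨U, hU, hxy2 ▸ hu⟩
    have ne4 : z ≠ x + y := by
      intro h
      have hxy2 : x + z = y := by rw [h, ← add_assoc, add_self, zero_add]
      exact hy.2 ⟨U, hU, hxy2 ▸ hu⟩
    have ne5 : z ≠ y + z := by
      intro h
      have hy0 : y = 0 := by
        have h0 : z + (y + z) = 0 := by rw [← h, add_self]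
        rwa [add_comm y z, ← add_assoc, add_self, zero_add] at h0
      exact hy.1 hy0
    have ne6 : x + y ≠ y + z := by
      intro h
      apply hu0
      rw [hudef]
      have h0 : (x + y) + (y + z) = 0 := by rw [← h, add_self]
      rwa [add_assoc, ← add_assoc y y z, add_self, zero_add] at h0
    have hsub4 : ({x, z, x + y, y + z} : Finset V) ⊆ Hf.filter fun a => a + u ∈ H := by
      intro a ha
      simp only [Finset.mem_insert, Finset.mem_singleton] at ha
      rcases ha with h | h | h | h <;> rw [h] <;> assumption
    have hc4 : ({x, z, x + y, y + z} : Finset V).card = 4 := by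
      have d1 : x ∉ ({z, x + y, y + z} : Finset V) := by
        simp only [Finset.mem_insert, Finset.mem_singleton]
        push_neg
        exact ⟨hxz, ne2, ne3⟩
      have d2 : z ∉ ({x + y, y + z} : Finset V) := by
        simp only [Finset.mem_insert, Finset.mem_singleton]
        push_neg
        exact ⟨ne4, ne5⟩
      have d3 : (x + y) ∉ ({y + z} : Finset V) := by
        simp only [Finset.mem_singleton]
        exact ne6
      rw [Finset.card_insert_of_notMem d1, Finset.card_insert_of_notMem d2,
        Finset.card_insert_of_notMem d3, Finset.card_singleton]
    calc 4 = ({x, z, x + y, y + z} : Finset V).card := hc4.symm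
      _ ≤ _ := Finset.card_le_card hsub4
  -- f(u') ≥ 2 for every u' ∈ A
  have htwo : ∀ u' ∈ A, 2 ≤ (Hf.filter fun a => a + u' ∈ H).card := by
    intro u' hu'A
    rcases (hmemA u').mp hu'A with ⟨hu'U, hu'0⟩
    obtain ⟨a, haH, hauH⟩ := exists_pair P hn hdim hmeet hcard hU hu'U hu'0
    have hd : a ≠ a + u' := by
      intro h
      apply hu'0
      have h0 : a + (a + u') = 0 := by rw [← h, add_self]
      rwa [← add_assoc, add_self, zero_add] at h0
    have hsub2 : ({a, a + u'} : Finset V) ⊆ Hf.filter fun b => b + u' ∈ H := by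
      intro b hb
      simp only [Finset.mem_insert, Finset.mem_singleton] at hb
      rcases hb with h | h
      · rw [h, Finset.mem_filter, hmemHf]
        exact ⟨haH, hauH⟩
      · rw [h, Finset.mem_filter, hmemHf]
        refine ⟨hauH, ?_⟩
        have heq : (a + u') + u' = a := by rw [add_assoc, add_self, add_zero]
        rw [heq]; exact haH
    calc 2 = ({a, a + u'} : Finset V).card := (Finset.card_pair hd).symm
      _ ≤ _ := Finset.card_le_card hsub2
  -- lower bound on T.card
  have hlower : 4 + 2 * (A.card - 1) ≤ T.card := by
    rw [hTcard, ← Finset.sum_erase_add _ _ huA]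
    have hsum2 : 2 * (A.erase u).card ≤
        ∑ u' ∈ A.erase u, (Hf.filter fun a => a + u' ∈ H).card := by
      calc 2 * (A.erase u).card = ∑ _u' ∈ A.erase u, 2 := by rw [Finset.sum_const, smul_eq_mul, mul_comm]
        _ ≤ _ := Finset.sum_le_sum fun u' h => htwo u' (Finset.mem_of_mem_erase h)
    rw [Finset.card_erase_of_mem huA] at hsum2
    omega
  have hHfcard : Hf.card = 2 * 2 ^ n - 2 := by
    rw [hHf, ← Set.ncard_eq_toFinset_card]
    exact holes_card_phase1 P hn hdim hmeet hcard
  rw [hAcard] at hlower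
  rw [hHfcard] at hupper
  omega


lemma extend_one (P : Finset (Submodule K V)) (hn : 1 ≤ n)
    (hdim : ∀ U ∈ P, finrank K U = n)
    (hmeet : ∀ U ∈ P, ∀ W ∈ P, U ≠ W → U ⊓ W = ⊥)
    (hcard : P.card = 2 ^ n - 1) :
    ∃ T : Submodule K V, finrank K T = n ∧ T ∉ P ∧ ∀ U ∈ P, T ⊓ U = ⊥ := by
  classical
  have he := two_le_pow hn
  have hH := holes_card_phase1 P hn hdim hmeet hcard
  have hHne : (holes P).Nonempty := by
    rw [← Set.ncard_pos (Set.toFinite _), hH]; omega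
  obtain ⟨x₀, hx₀⟩ := hHne
  set H := holes P with hHdef
  set S : Set V := {y | y ∈ H ∧ (y = x₀ ∨ x₀ + y ∈ H)} with hS
  set C : Set V := insert 0 S with hC
  have htr : ∀ a b c : V, a ∈ H → b ∈ H → c ∈ H → a ≠ c → a + b ∈ H → b + c ∈ H →
      a + c ∈ H := fun a b c h1 h2 h3 h4 h5 h6 =>
    hole_trans P hn hdim hmeet hcard h1 h2 h3 h5 h6 h4
  have hmemS : ∀ y ∈ S, y ∈ H := fun y hy => hy.1
  have haddC : ∀ a ∈ C, ∀ b ∈ C, a + b ∈ C := by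
    intro a ha b hb
    rcases eq_or_ne a 0 with rfl | ha0
    · rwa [zero_add]
    rcases eq_or_ne b 0 with rfl | hb0
    · rwa [add_zero]
    rcases eq_or_ne a b with rfl | hab
    · rw [add_self]; exact Set.mem_insert _ _
    have haS : a ∈ S := by
      rcases ha with h | h
      · exact absurd h.symm (Ne.symm ha0)
      · exact h
    have hbS : b ∈ S := by
      rcases hb with h | h
      · exact absurd h.symm (Ne.symm hb0)
      · exact h
    have hab0 : a + b ≠ 0 := fun h => hab (eq_of_add_eq_zero' h)
    -- show a + b ∈ H
    have habH : a + b ∈ H := by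
      rcases haS.2 with rfl | haN
      · rcases hbS.2 with h | hbN
        · exact absurd h.symm hab
        · exact hbN
      · rcases hbS.2 with rfl | hbN
        · have : a + b = b + a := add_comm a b
          rw [this]; exact haN
        · -- both neighbors of x₀
          have hax₀ : a + x₀ ∈ H := by rwa [add_comm a x₀]
          exact htr a x₀ b haS.1 hx₀ hbS.1 hab hax₀ hbN
    -- show a + b ∈ S
    rcases eq_or_ne (a + b) x₀ with h | h
    · exact Set.mem_insert_iff.mpr (Or.inr ⟨habH, Or.inl h⟩)
    · have hx₀a : x₀ + a ∈ H ∨ a = x₀ := by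
        rcases haS.2 with h' | h'
        · exact Or.inr h'
        · exact Or.inl h'
      have hkey : x₀ + (a + b) ∈ H := by
        rcases haS.2 with rfl | haN
        · -- a = x₀ : x₀ + (x₀ + b) = b
          have : a + (a + b) = b := by rw [← add_assoc, add_self, zero_add]
          rw [this]; exact hbS.1
        · -- x₀ + a ∈ H, a + (a+b) = b ∈ H
          have h2 : a + (a + b) ∈ H := by
            have heq : a + (a + b) = b := by rw [← add_assoc, add_self, zero_add]
            rw [heq]; exact hbS.1
          exact htr x₀ a (a + b) hx₀ haS.1 habH (Ne.symm h) haN h2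
      exact Set.mem_insert_iff.mpr (Or.inr ⟨habH, Or.inr hkey⟩)
  -- build the submodule
  set T : Submodule K V :=
    { carrier := C
      zero_mem' := Set.mem_insert _ _
      add_mem' := fun {a} {b} ha hb => haddC a ha b hb
      smul_mem' := by
        intro c v hv
        rcases zmod2_cases c with rfl | rfl
        · rw [zero_smul]; exact Set.mem_insert _ _
        · rwa [one_smul] } with hT
  have hTmem : ∀ v : V, v ∈ T ↔ v ∈ C := fun v => Iff.rfl
  have hTholes : ∀ v : V, v ∈ T → v ≠ 0 → v ∈ H := by
    intro v hv hv0
    rcases hv with h | h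
    · exact absurd h hv0
    · exact h.1
  have hTinf : ∀ U ∈ P, T ⊓ U = ⊥ := by
    intro U hU
    rw [eq_bot_iff]
    rintro v ⟨hv1, hv2⟩
    rcases eq_or_ne v 0 with rfl | hv0
    · exact Submodule.zero_mem ⊥
    · exact absurd ⟨U, hU, hv2⟩ (hTholes v hv1 hv0).2
  have hTnotP : T ∉ P := by
    intro hTP
    exact hx₀.2 ⟨T, hTP, Set.mem_insert_iff.mpr (Or.inr ⟨hx₀, Or.inl rfl⟩)⟩
  -- dimension bounds
  have hPne : ∃ U, U ∈ P := by
    have : 0 < P.card := by omega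
    rcases Finset.card_pos.mp this with ⟨U, hU⟩
    exact ⟨U, hU⟩
  obtain ⟨U, hU⟩ := hPne
  have hfle : finrank K T ≤ n := by
    have h := Submodule.finrank_sup_add_finrank_inf_eq T U
    rw [hTinf U hU, finrank_bot, add_zero, hdim U hU] at h
    have hle : finrank K ↥(T ⊔ U) ≤ 2 * n := by
      simpa [finrankV] using Submodule.finrank_le (T ⊔ U)
    omega
  -- lower bound on cardinality
  set B : Set V := {y | y ∈ holes P ∧ y ≠ x₀ ∧ covered P (x₀ + y)} with hB
  have hBle : B.ncard ≤ P.card := nonneighbor_le P hn hdim hmeet hcard hx₀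
  have hBsub : B ⊆ H := fun y hy => hy.1
  have hdiff : (H \ B).ncard = H.ncard - B.ncard := Set.ncard_diff hBsub (Set.toFinite _)
  have hsubC : insert (0:V) (H \ B) ⊆ C := by
    intro v hv
    rcases hv with rfl | ⟨hvH, hvB⟩
    · exact Set.mem_insert _ _
    · rcases eq_or_ne v x₀ with rfl | hvx
      · exact Set.mem_insert_iff.mpr (Or.inr ⟨hvH, Or.inl rfl⟩)
      · have hnc : ¬ covered P (x₀ + v) := fun hc => hvB ⟨hvH, hvx, hc⟩
        have hne0 : x₀ + v ≠ 0 := by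
          intro h0
          exact hvx (eq_of_add_eq_zero' h0).symm
        exact Set.mem_insert_iff.mpr (Or.inr ⟨hvH, Or.inr ⟨hne0, hnc⟩⟩)
  have hCge : 2 ^ n ≤ C.ncard := by
    have h0 : (0:V) ∉ H \ B := fun h => h.1.1 rfl
    have h1 : (insert (0:V) (H \ B)).ncard = (H \ B).ncard + 1 :=
      Set.ncard_insert_of_notMem h0 (Set.toFinite _)
    have h2 := Set.ncard_le_ncard hsubC (Set.toFinite _)
    rw [hcard] at hBle
    rw [hH] at hdiff
    omega
  have hCcard : C.ncard = 2 ^ (finrank K T) := card_submodule T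
  have hfeq : finrank K T = n := by
    have h2 : (2:ℕ) ^ (finrank K T) ≤ 2 ^ n := Nat.pow_le_pow_right (by norm_num) hfle
    have h3 : (2:ℕ) ^ (finrank K T) = 2 ^ n := by omega
    exact Nat.pow_right_injective (le_refl 2) h3
  exact ⟨T, hfeq, hTnotP, hTinf⟩


lemma extend_two (P : Finset (Submodule K V)) (hn : 1 ≤ n)
    (hdim : ∀ U ∈ P, finrank K U = n)
    (hmeet : ∀ U ∈ P, ∀ W ∈ P, U ≠ W → U ⊓ W = ⊥)
    (hcard : P.card = 2 ^ n) :
    ∃ T : Submodule K V, finrank K T = n ∧ T ∉ P ∧ (∀ U ∈ P, T ⊓ U = ⊥) ∧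
      ∀ v : V, v ≠ 0 → ¬ covered P v → v ∈ T := by
  classical
  have he := two_le_pow hn
  have hH := holes_card_phase2 P hn hdim hmeet hcard
  set H := holes P with hHdef
  set C : Set V := insert 0 H with hC
  have haddC : ∀ a ∈ C, ∀ b ∈ C, a + b ∈ C := by
    intro a ha b hb
    rcases eq_or_ne a 0 with rfl | ha0
    · rwa [zero_add]
    rcases eq_or_ne b 0 with rfl | hb0
    · rwa [add_zero]
    rcases eq_or_ne a b with rfl | hab
    · rw [add_self]; exact Set.mem_insert _ _
    have haH : a ∈ H := by
      rcases ha with h | h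
      · exact absurd h ha0
      · exact h
    have hbH : b ∈ H := by
      rcases hb with h | h
      · exact absurd h hb0
      · exact h
    have hab0 : a + b ≠ 0 := fun h => hab (eq_of_add_eq_zero' h)
    have habH : a + b ∈ H := by
      by_contra hcon
      have hcov : covered P (a + b) := by
        by_contra hnc
        exact hcon ⟨hab0, hnc⟩
      obtain ⟨U', hU', hvU'⟩ := hcov
      have haU' : a ∉ U' := not_mem_of_hole haH hU'
      have hbd := holes_in_sup_le P hn hdim hmeet hU' haH.1 haU'
      rw [hcard] at hbd
      have hsub : ({a, b} : Set V) ⊆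
          ((U' ⊔ (K ∙ a) : Submodule K V) : Set V) ∩ holes P := by
        rintro v hv
        simp only [Set.mem_insert_iff, Set.mem_singleton_iff] at hv
        rcases hv with hv | hv <;> rw [hv]
        · exact ⟨Submodule.mem_sup_right (Submodule.mem_span_singleton_self a), haH⟩
        · exact ⟨(mem_sup_span_iff b).mpr (Or.inr hvU'), hbH⟩
      have h2 : ({a, b} : Set V).ncard = 2 := Set.ncard_pair hab
      have hle := Set.ncard_le_ncard hsub (Set.toFinite _)
      omega
    exact Set.mem_insert_iff.mpr (Or.inr habH)
  set T : Submodule K V :=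
    { carrier := C
      zero_mem' := Set.mem_insert _ _
      add_mem' := fun {a} {b} ha hb => haddC a ha b hb
      smul_mem' := by
        intro c v hv
        rcases zmod2_cases c with rfl | rfl
        · rw [zero_smul]; exact Set.mem_insert _ _
        · rwa [one_smul] } with hT
  have hTholes : ∀ v : V, v ∈ T → v ≠ 0 → v ∈ H := by
    intro v hv hv0
    rcases hv with h | h
    · exact absurd h hv0
    · exact h
  have hTinf : ∀ U ∈ P, T ⊓ U = ⊥ := by
    intro U hU
    rw [eq_bot_iff]
    rintro v ⟨hv1, hv2⟩
    rcases eq_or_ne v 0 with rfl | hv0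
    · exact Submodule.zero_mem ⊥
    · exact absurd ⟨U, hU, hv2⟩ (hTholes v hv1 hv0).2
  have hHne : H.Nonempty := by
    rw [← Set.ncard_pos (Set.toFinite _), hH]; omega
  obtain ⟨x₀, hx₀⟩ := hHne
  have hTnotP : T ∉ P := by
    intro hTP
    exact hx₀.2 ⟨T, hTP, Set.mem_insert_iff.mpr (Or.inr hx₀)⟩
  have hCcard : C.ncard = 2 ^ n := by
    have h0 : (0:V) ∉ H := fun h => h.1 rfl
    rw [hC, Set.ncard_insert_of_notMem h0 (Set.toFinite _), hH]
    omega
  have hfeq : finrank K T = n := by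
    have h1 : (C : Set V).ncard = 2 ^ (finrank K T) := card_submodule T
    rw [hCcard] at h1
    exact (Nat.pow_right_injective (le_refl 2) h1.symm)
  refine ⟨T, hfeq, hTnotP, hTinf, ?_⟩
  intro v hv0 hnc
  exact Set.mem_insert_iff.mpr (Or.inr ⟨hv0, hnc⟩)

/-- Main extension theorem, Finset-free statement. -/
theorem main (hn : 1 ≤ n) (D : Set (Submodule K V))
    (hdim : ∀ U ∈ D, finrank K U = n)
    (hmeet : ∀ U ∈ D, ∀ W ∈ D, U ≠ W → U ⊓ W = ⊥)
    (hsize : D.ncard = 2 ^ n - 1) :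
    ∃ D' : Set (Submodule K V), D ⊆ D' ∧ (∀ U ∈ D', finrank K U = n) ∧
      (∀ U ∈ D', ∀ W ∈ D', U ≠ W → U ⊓ W = ⊥) ∧ D'.ncard = 2 ^ n + 1 ∧
      ∀ v : V, v ≠ 0 → ∃! U, U ∈ D' ∧ v ∈ U := by
  classical
  haveI : Finite (Submodule K V) := finite_submodule
  have he := two_le_pow hn
  have hDfin : D.Finite := Set.toFinite D
  set P : Finset (Submodule K V) := hDfin.toFinset with hP
  have hPmem : ∀ U, U ∈ P ↔ U ∈ D := fun U => Set.Finite.mem_toFinset _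
  have hPcard : P.card = 2 ^ n - 1 := by
    rw [hP, ← Set.ncard_eq_toFinset_card]; exact hsize
  have hPdim : ∀ U ∈ P, finrank K U = n := fun U hU => hdim U ((hPmem U).mp hU)
  have hPmeet : ∀ U ∈ P, ∀ W ∈ P, U ≠ W → U ⊓ W = ⊥ :=
    fun U hU W hW h => hmeet U ((hPmem U).mp hU) W ((hPmem W).mp hW) h
  obtain ⟨T₁, hT₁f, hT₁nP, hT₁inf⟩ := extend_one P hn hPdim hPmeet hPcard
  set P₂ : Finset (Submodule K V) := insert T₁ P with hP₂
  have hP₂card : P₂.card = 2 ^ n := by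
    rw [hP₂, Finset.card_insert_of_notMem hT₁nP, hPcard]
    omega
  have hP₂dim : ∀ U ∈ P₂, finrank K U = n := by
    intro U hU
    rcases Finset.mem_insert.mp hU with rfl | h
    · exact hT₁f
    · exact hPdim U h
  have hP₂meet : ∀ U ∈ P₂, ∀ W ∈ P₂, U ≠ W → U ⊓ W = ⊥ := by
    intro U hU W hW hUW
    rcases Finset.mem_insert.mp hU with rfl | hU' <;>
      rcases Finset.mem_insert.mp hW with rfl | hW'
    · exact absurd rfl hUW
    · exact hT₁inf W hW'
    · rw [inf_comm]; exact hT₁inf U hU'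
    · exact hPmeet U hU' W hW' hUW
  obtain ⟨T₂, hT₂f, hT₂nP₂, hT₂inf, hT₂cov⟩ := extend_two P₂ hn hP₂dim hP₂meet hP₂card
  refine ⟨insert T₂ (insert T₁ D), ?_, ?_, ?_, ?_, ?_⟩
  · intro U hU
    exact Set.mem_insert_iff.mpr (Or.inr (Set.mem_insert_iff.mpr (Or.inr hU)))
  · intro U hU
    rcases hU with rfl | hU
    · exact hT₂f
    rcases hU with rfl | hU
    · exact hT₁f
    · exact hdim U hU
  · -- pairwise trivial intersections
    have key : ∀ U ∈ insert T₂ (insert T₁ D), ∀ W ∈ insert T₂ (insert T₁ D),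
        U ≠ W → U ⊓ W = ⊥ := by
      have hmem2 : ∀ U, U ∈ insert T₂ (insert T₁ D) → U = T₂ ∨ U ∈ P₂ := by
        intro U hU
        rcases hU with rfl | hU
        · exact Or.inl rfl
        rcases hU with rfl | hU
        · exact Or.inr (Finset.mem_insert_self _ _)
        · exact Or.inr (Finset.mem_insert.mpr (Or.inr ((hPmem U).mpr hU)))
      intro U hU W hW hUW
      rcases hmem2 U hU with rfl | hU' <;> rcases hmem2 W hW with rfl | hW'
      · exact absurd rfl hUW
      · exact hT₂inf W hW'
      · rw [inf_comm]; exact hT₂inf U hU'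
      · exact hP₂meet U hU' W hW' hUW
    exact key
  · -- cardinality
    have hT₁nD : T₁ ∉ D := fun h => hT₁nP ((hPmem T₁).mpr h)
    have hT₂nD : T₂ ∉ insert T₁ D := by
      intro h
      apply hT₂nP₂
      rcases h with h | h
      · exact h ▸ Finset.mem_insert_self _ _
      · exact Finset.mem_insert.mpr (Or.inr ((hPmem T₂).mpr h))
    rw [Set.ncard_insert_of_notMem hT₂nD (Set.toFinite _),
      Set.ncard_insert_of_notMem hT₁nD (Set.toFinite _), hsize]
    omega
  · -- coverage
    intro v hv0
    have hexists : ∃ U, U ∈ insert T₂ (insert T₁ D) ∧ v ∈ U := by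
      by_cases hc : covered P₂ v
      · obtain ⟨U, hU, hvU⟩ := hc
        rcases Finset.mem_insert.mp hU with rfl | hU'
        · exact ⟨U, Set.mem_insert_iff.mpr (Or.inr (Set.mem_insert _ _)), hvU⟩
        · exact ⟨U, Set.mem_insert_iff.mpr (Or.inr (Set.mem_insert_iff.mpr
            (Or.inr ((hPmem U).mp hU')))), hvU⟩
      · exact ⟨T₂, Set.mem_insert _ _, hT₂cov v hv0 hc⟩
    obtain ⟨U, hU, hvU⟩ := hexists
    refine ⟨U, ⟨hU, hvU⟩, ?_⟩
    intro W ⟨hW, hvW⟩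
    by_contra hne
    have hmem2 : ∀ X, X ∈ insert T₂ (insert T₁ D) → X = T₂ ∨ X ∈ P₂ := by
      intro X hX
      rcases hX with rfl | hX
      · exact Or.inl rfl
      rcases hX with rfl | hX
      · exact Or.inr (Finset.mem_insert_self _ _)
      · exact Or.inr (Finset.mem_insert.mpr (Or.inr ((hPmem X).mpr hX)))
    have hWU : W ⊓ U = ⊥ := by
      rcases hmem2 W hW with rfl | hW' <;> rcases hmem2 U hU with rfl | hU'
      · exact absurd rfl hne
      · exact hT₂inf U hU'
      · rw [inf_comm]; exact hT₂inf W hW'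
      · exact hP₂meet W hW' U hU' hne
    have : v ∈ W ⊓ U := ⟨hvW, hvU⟩
    rw [hWU] at this
    exact hv0 (by simpa using this)

end BPS

/-- A partial `n`-spread of `F₂^(2n)` of size `2^n - 1` extends to an
`n`-spread (of size `2^n + 1`, covering every nonzero vector exactly once). -/
theorem binary_partial_spread_extends_to_spread (n : ℕ) (hn : 1 ≤ n)
    (D : Set (Submodule (ZMod 2) (Fin (2 * n) → ZMod 2)))
    (hdim : ∀ U ∈ D, Module.finrank (ZMod 2) U = n)
    (hmeet : ∀ U ∈ D, ∀ W ∈ D, U ≠ W → U ⊓ W = ⊥)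
    (hsize : D.ncard = 2 ^ n - 1) :
    ∃ D' : Set (Submodule (ZMod 2) (Fin (2 * n) → ZMod 2)),
      D ⊆ D' ∧
      (∀ U ∈ D', Module.finrank (ZMod 2) U = n) ∧
      (∀ U ∈ D', ∀ W ∈ D', U ≠ W → U ⊓ W = ⊥) ∧
      D'.ncard = 2 ^ n + 1 ∧
      ∀ v : Fin (2 * n) → ZMod 2, v ≠ 0 → ∃! U, U ∈ D' ∧ v ∈ U := by
  exact BPS.main hn D hdim hmeet hsize
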